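/- Let {I_n} be a partition of ω into finite intervals and {r_n} a descending sequence of positive rationals with r_0 = 1, I_0 = {0}, |⋃_{j<n} I_j| ≤ r_n·|I_n| for all n ≥ 1, and |I_n|·r_{n+1} ≤ 2^{-n-1}. For S ⊆ ω define the weight w_S(m) = r_n if m ∈ I_n and n ∉ S, and w_S(m) = r_{n+1} if m ∈ I_n and n ∈ S. Then for every co-infinite S ⊆ ω, the sum ∑_{m∈ω} w_S(m) diverges, while lim_{m→∞} w_S(m) = 0. -/

import Mathlib

/-- Construction 2.1: for every co-infinite `S ⊆ ω`, the total weight `∑ w_S(m)` diverges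
while `w_S(m) → 0`. -/
theorem stmt1 (I : ℕ → Finset ℕ) (r : ℕ → ℚ)
    (hpart : ∀ m : ℕ, ∃! n, m ∈ I n)
    (hord : ∀ n m : ℕ, n < m → ∀ a ∈ I n, ∀ b ∈ I m, a < b)
    (hpos : ∀ n, 0 < r n) (hdesc : ∀ n, r (n + 1) < r n)
    (hr0 : r 0 = 1) (hI0 : I 0 = {0})
    (hgrow : ∀ n, 1 ≤ n → (((Finset.range n).biUnion I).card : ℚ) ≤ r n * (I n).card)
    (hsmall : ∀ n, ((I n).card : ℚ) * r (n + 1) ≤ (2 : ℚ)⁻¹ ^ (n + 1))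
    (w : Set ℕ → ℕ → ℚ)
    (hw : ∀ (S : Set ℕ) (m n : ℕ), m ∈ I n →
      (n ∉ S → w S m = r n) ∧ (n ∈ S → w S m = r (n + 1)))
    (S : Set ℕ) (hS : Sᶜ.Infinite) :
    ¬ Summable (fun m => ((w S m : ℝ))) ∧
      Filter.Tendsto (fun m => ((w S m : ℝ))) Filter.atTop (nhds 0) := by
  classical
  choose nm hnm using fun m => (hpart m).exists
  -- each I n is nonempty
  have hIne : ∀ n, (I n).Nonempty := by
    intro n
    rcases Nat.eq_zero_or_pos n with h0 | h1
    · subst h0; rw [hI0]; exact ⟨0, Finset.mem_singleton_self 0⟩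
    · by_contra he
      rw [Finset.not_nonempty_iff_eq_empty] at he
      have hg := hgrow n h1
      rw [he] at hg
      simp only [Finset.card_empty, Nat.cast_zero, mul_zero] at hg
      have hc : ((Finset.range n).biUnion I).card = 0 := Nat.le_zero.1 (by exact_mod_cast hg)
      have h0m : (0:ℕ) ∈ (Finset.range n).biUnion I :=
        Finset.mem_biUnion.2 ⟨0, Finset.mem_range.2 h1, by rw [hI0]; simp⟩
      rw [Finset.card_eq_zero] at hc
      rw [hc] at h0m
      exact absurd h0m (Finset.notMem_empty 0)
  -- nonnegativity of w
  have hw0 : ∀ m, (0:ℝ) ≤ (w S m : ℝ) := by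
    intro m
    rcases hw S m (nm m) (hnm m) with ⟨h1, h2⟩
    by_cases hms : nm m ∈ S
    · rw [h2 hms]; exact_mod_cast (hpos _).le
    · rw [h1 hms]; exact_mod_cast (hpos _).le
  -- card lower bound for the union
  have hcard : ∀ n : ℕ, 1 ≤ n → (n:ℚ) ≤ (((Finset.range n).biUnion I).card : ℚ) := by
    intro n _
    have hdisj : ∀ a ∈ Finset.range n, ∀ b ∈ Finset.range n, a ≠ b →
        Disjoint (I a) (I b) := by
      intro a _ b _ hab
      rw [Finset.disjoint_left]
      intro m hma hmb
      exact hab (((hpart m).unique hma (hnm m)).trans ((hpart m).unique hmb (hnm m)).symm)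
    have hcb := Finset.card_biUnion hdisj
    have hsum : n ≤ ∑ j ∈ Finset.range n, (I j).card := by
      calc n = ∑ _j ∈ Finset.range n, 1 := by simp
      _ ≤ ∑ j ∈ Finset.range n, (I j).card :=
        Finset.sum_le_sum fun j _ => (hIne j).card_pos
    rw [hcb]
    exact_mod_cast hsum
  constructor
  · intro hsum
    obtain ⟨N, hN⟩ := exists_nat_gt (∑' m, (w S m : ℝ))
    obtain ⟨n, hnS, hNn⟩ := hS.exists_gt N
    have hn1 : 1 ≤ n := Nat.lt_of_le_of_lt (Nat.zero_le N) hNn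
    have hle := Summable.sum_le_tsum (I n) (fun m _ => hw0 m) hsum
    have hsum_eq : ∑ m ∈ I n, (w S m : ℝ) = (((I n).card : ℚ) * r n : ℚ) := by
      push_cast
      rw [Finset.sum_congr rfl (fun m hm => by rw [(hw S m n hm).1 hnS])]
      rw [Finset.sum_const, nsmul_eq_mul]
    have hge : (n:ℚ) ≤ ((I n).card : ℚ) * r n := by
      calc (n:ℚ) ≤ (((Finset.range n).biUnion I).card : ℚ) := hcard n hn1
      _ ≤ r n * (I n).card := hgrow n hn1
      _ = _ := mul_comm _ _
    have h1 : (n:ℝ) ≤ ∑ m ∈ I n, (w S m : ℝ) := by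
      rw [hsum_eq]; exact_mod_cast hge
    have h2 : (N:ℝ) < n := by exact_mod_cast hNn
    linarith
  · -- tendsto 0
    have hnmtop : Filter.Tendsto nm Filter.atTop Filter.atTop := by
      rw [Filter.tendsto_atTop]
      intro N
      have hfin : {m | nm m < N}.Finite := by
        apply Set.Finite.subset ((Finset.range N).biUnion I).finite_toSet
        intro m hm
        exact Finset.mem_coe.2 (Finset.mem_biUnion.2
          ⟨nm m, Finset.mem_range.2 hm, hnm m⟩)
      have hev := hfin.eventually_cofinite_notMem
      rw [Nat.cofinite_eq_atTop] at hev
      filter_upwards [hev] with m hm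
      exact Nat.le_of_not_lt hm
    have hrb : ∀ n, (r n : ℝ) ≤ ((2:ℝ)⁻¹) ^ n := by
      intro n
      cases n with
      | zero => simp [hr0]
      | succ k =>
        have h1 : (1:ℚ) ≤ ((I k).card : ℚ) := by exact_mod_cast (hIne k).card_pos
        have : r (k+1) ≤ (2:ℚ)⁻¹ ^ (k+1) := by
          calc r (k+1) = 1 * r (k+1) := (one_mul _).symm
          _ ≤ ((I k).card : ℚ) * r (k+1) :=
            mul_le_mul_of_nonneg_right h1 (hpos _).le
          _ ≤ _ := hsmall k
        have h2 : (((2:ℚ)⁻¹ : ℚ) : ℝ) = (2:ℝ)⁻¹ := by norm_num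
        rw [← h2, ← Rat.cast_pow]
        exact Rat.cast_le.2 this
    have hrtend : Filter.Tendsto (fun n => ((r n : ℝ))) Filter.atTop (nhds 0) := by
      apply squeeze_zero (fun n => by exact_mod_cast (hpos n).le) hrb
      exact tendsto_pow_atTop_nhds_zero_of_lt_one (by norm_num) (by norm_num)
    have hcomp := hrtend.comp hnmtop
    apply squeeze_zero hw0 (g := fun m => ((r (nm m) : ℝ))) _ hcomp
    intro m
    rcases hw S m (nm m) (hnm m) with ⟨h1, h2⟩
    by_cases hms : nm m ∈ S
    · show (w S m : ℝ) ≤ (r (nm m) : ℝ)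
      rw [h2 hms]; exact_mod_cast (hdesc (nm m)).le
    · show (w S m : ℝ) ≤ (r (nm m) : ℝ)
      rw [h1 hms]
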